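/- The property of being s-meshed is partition regular: if A ⊆ F is s-meshed and A = A₀ ∪ A₁, then A₀ or A₁ is s-meshed. -/

import Mathlib

open Finset

/-- `FU t` : the set of finite unions of an infinite sequence `t` in `F`. -/
def FU (t : ℕ → Finset ℕ) : Set (Finset ℕ) :=
  {x | ∃ v : Finset ℕ, v.Nonempty ∧ x = v.biUnion t}

/-- a sequence of nonempty pairwise disjoint finite sets. -/
def IsDisjointSeq (t : ℕ → Finset ℕ) : Prop :=
  (∀ i, (t i).Nonempty) ∧ Pairwise (Function.onFun Disjoint t)

/-- `ordLT s t` : `max s < min t`, i.e. every element of `s` is below every element of `t`. -/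
def ordLT (s t : Finset ℕ) : Prop := ∀ a ∈ s, ∀ b ∈ t, a < b

/-- two sets mesh if neither lies entirely below the other. -/
def Mesh (s t : Finset ℕ) : Prop := ¬ ordLT s t ∧ ¬ ordLT t s

/-- finite unions of a finite sequence. -/
def FUfin {n : ℕ} (t : Fin n → Finset ℕ) : Set (Finset ℕ) :=
  {x | ∃ v : Finset (Fin n), v.Nonempty ∧ x = v.biUnion t}

/-- the meshing graph of `t` w.r.t. `s` is complete: any two distinct members of `t`
contain members of `s` which mesh. -/
def CompleteMesh (s : ℕ → Finset ℕ) {n : ℕ} (t : Fin n → Finset ℕ) : Prop :=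
  ∀ i j : Fin n, i ≠ j → ∃ m k, s m ⊆ t i ∧ s k ⊆ t j ∧ Mesh (s m) (s k)

/-- `A` is `s`-meshed: for every `n` there is an `n`-witness, i.e. a disjoint sequence of
length `n` whose FU-set lies in `FU s ∩ A` and whose meshing graph is complete. -/
def SMeshed (s : ℕ → Finset ℕ) (A : Set (Finset ℕ)) : Prop :=
  ∀ n : ℕ, ∃ t : Fin n → Finset ℕ, (∀ i, (t i).Nonempty) ∧
    Pairwise (Function.onFun Disjoint t) ∧ FUfin t ⊆ FU s ∩ A ∧ CompleteMesh s t

/-! ### Auxiliary: binary supports -/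

/-- binary support of a natural number -/
def nbits (n : ℕ) : Finset ℕ := n.bitIndices.toFinset

lemma sum_nbits (n : ℕ) : ∑ i ∈ nbits n, 2 ^ i = n :=
  Finset.twoPowSum_toFinset_bitIndices n

lemma nbits_sum_pow (s : Finset ℕ) : nbits (∑ i ∈ s, 2 ^ i) = s :=
  Finset.toFinset_bitIndices_twoPowSum s

lemma nbits_add (x y : ℕ) (h : Disjoint (nbits x) (nbits y)) :
    nbits (x + y) = nbits x ∪ nbits y := by
  have : x + y = ∑ i ∈ nbits x ∪ nbits y, 2 ^ i := by
    rw [Finset.sum_union h, sum_nbits, sum_nbits]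
  rw [this, nbits_sum_pow]

lemma two_pow_le_of_mem_nbits {i x : ℕ} (h : i ∈ nbits x) : 2 ^ i ≤ x := by
  conv_rhs => rw [← sum_nbits x]
  exact Finset.single_le_sum (fun _ _ => Nat.zero_le _) h

lemma lt_of_mem_nbits {i x : ℕ} (h : i ∈ nbits x) : i < x :=
  lt_of_lt_of_le (Nat.lt_two_pow_self (n := i)) (two_pow_le_of_mem_nbits h)

lemma nbits_nonempty {x : ℕ} (h : 1 ≤ x) : (nbits x).Nonempty := by
  rcases Finset.eq_empty_or_nonempty (nbits x) with he | hne
  · exfalso; have := sum_nbits x; rw [he, Finset.sum_empty] at this; omega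
  · exact hne

lemma le_of_mem_nbits_of_dvd {e x i : ℕ} (hd : 2 ^ e ∣ x) (h : i ∈ nbits x) : e ≤ i := by
  by_contra hlt
  push_neg at hlt
  set L := (nbits x).filter (fun j => j < e) with hL
  set H := (nbits x).filter (fun j => ¬ j < e) with hH
  have hsplit : ∑ j ∈ L, 2 ^ j + ∑ j ∈ H, 2 ^ j = x := by
    rw [Finset.sum_filter_add_sum_filter_not, sum_nbits]
  have hdH : 2 ^ e ∣ ∑ j ∈ H, 2 ^ j := by
    apply Finset.dvd_sum
    intro j hj
    rw [hH, Finset.mem_filter] at hj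
    exact pow_dvd_pow 2 (by omega)
  have hdL : 2 ^ e ∣ ∑ j ∈ L, 2 ^ j := by
    have h' : 2 ^ e ∣ (∑ j ∈ L, 2 ^ j + ∑ j ∈ H, 2 ^ j) := by rw [hsplit]; exact hd
    exact (Nat.dvd_add_right hdH).mp (by rwa [add_comm] at h')
  have hLsub : L ⊆ Finset.range e := by
    intro j hj; rw [hL, Finset.mem_filter] at hj; exact Finset.mem_range.mpr hj.2
  have hlt' : ∑ j ∈ L, 2 ^ j < 2 ^ e := by
    calc ∑ j ∈ L, 2 ^ j ≤ ∑ j ∈ Finset.range e, 2 ^ j :=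
          Finset.sum_le_sum_of_subset hLsub
      _ = 2 ^ e - 1 := by rw [Nat.geomSum_eq (le_refl 2)]; omega
      _ < 2 ^ e := by have := Nat.two_pow_pos e; omega
  have hzero : ∑ j ∈ L, 2 ^ j = 0 := Nat.eq_zero_of_dvd_of_lt hdL hlt'
  have hiL : i ∈ L := by rw [hL, Finset.mem_filter]; exact ⟨h, hlt⟩
  have h2 := Finset.sum_eq_zero_iff.mp hzero i hiL
  have : 0 < 2 ^ i := Nat.two_pow_pos i
  omega

lemma nbits_finsetSum {α : Type*} (f : α → ℕ) (w : Finset α)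
    (h : ∀ a ∈ w, ∀ b ∈ w, a ≠ b → Disjoint (nbits (f a)) (nbits (f b))) :
    nbits (∑ a ∈ w, f a) = w.biUnion (fun a => nbits (f a)) := by
  classical
  induction w using Finset.cons_induction with
  | empty => simp [nbits]
  | cons a t ha ih =>
    rw [Finset.sum_cons, Finset.cons_eq_insert, Finset.biUnion_insert]
    have hrec : nbits (∑ x ∈ t, f x) = t.biUnion (fun x => nbits (f x)) := by
      apply ih
      intro x hx y hy hxy
      exact h x (Finset.mem_cons_of_mem hx) y (Finset.mem_cons_of_mem hy) hxy
    have hdisj : Disjoint (nbits (f a)) (nbits (∑ x ∈ t, f x)) := by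
      rw [hrec, Finset.disjoint_biUnion_right]
      intro x hx
      exact h a (Finset.mem_cons_self a t) x (Finset.mem_cons_of_mem hx)
        (fun he => ha (he ▸ hx))
    rw [nbits_add _ _ hdisj, hrec]

/-! ### A pigeonhole block lemma -/

lemma exists_block (b : Stream' ℕ) (start e : ℕ) :
    ∃ B : Finset ℕ, B.Nonempty ∧ (∀ i ∈ B, start ≤ i) ∧ 2 ^ e ∣ ∑ i ∈ B, b.get i := by
  set P : ℕ → ℕ := fun j => ∑ i ∈ Finset.Ico start (start + j), b.get i with hP
  have key : ∀ j j' : ℕ, j < j' → P j % 2 ^ e = P j' % 2 ^ e →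
      ∃ B : Finset ℕ, B.Nonempty ∧ (∀ i ∈ B, start ≤ i) ∧ 2 ^ e ∣ ∑ i ∈ B, b.get i := by
    intro j j' hlt heq
    refine ⟨Finset.Ico (start + j) (start + j'), ?_, ?_, ?_⟩
    · exact Finset.nonempty_Ico.mpr (by omega)
    · intro i hi; rw [Finset.mem_Ico] at hi; omega
    · have hsum : P j + ∑ i ∈ Finset.Ico (start + j) (start + j'), b.get i = P j' :=
        Finset.sum_Ico_consecutive _ (by omega) (by omega)
      have h0 : (P j' - P j) % 2 ^ e = 0 := Nat.sub_mod_eq_zero_of_mod_eq heq.symm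
      have h1 : ∑ i ∈ Finset.Ico (start + j) (start + j'), b.get i = P j' - P j := by omega
      rw [h1]
      exact Nat.dvd_of_mod_eq_zero h0
  have hmap : ∀ j ∈ Finset.range (2 ^ e + 1), P j % 2 ^ e ∈ Finset.range (2 ^ e) :=
    fun j _ => Finset.mem_range.mpr (Nat.mod_lt _ (Nat.two_pow_pos e))
  have hcard : (Finset.range (2 ^ e)).card < (Finset.range (2 ^ e + 1)).card := by simp
  obtain ⟨j, hj, j', hj', hne, heq⟩ :=
    Finset.exists_ne_map_eq_of_card_lt_of_maps_to hcard hmap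
  rcases lt_or_gt_of_ne hne with hlt | hlt
  · exact key j j' hlt heq
  · exact key j' j hlt heq.symm

/-! ### The recursive block construction -/

section Blocks

variable (b : Stream' ℕ)

/-- recursive state : (start, e) -/
noncomputable def bst : ℕ → ℕ × ℕ
  | 0 => (0, 0)
  | k + 1 =>
    let p := bst k
    let B := (exists_block b p.1 p.2).choose
    (B.sup id + 1, p.2 + ∑ i ∈ B, b.get i)

/-- the k-th block -/
noncomputable def blk (k : ℕ) : Finset ℕ := (exists_block b (bst b k).1 (bst b k).2).choose

lemma blk_nonempty (k : ℕ) : (blk b k).Nonempty :=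
  (exists_block b (bst b k).1 (bst b k).2).choose_spec.1

lemma blk_ge (k : ℕ) : ∀ i ∈ blk b k, (bst b k).1 ≤ i :=
  (exists_block b (bst b k).1 (bst b k).2).choose_spec.2.1

lemma blk_dvd (k : ℕ) : 2 ^ (bst b k).2 ∣ ∑ i ∈ blk b k, b.get i :=
  (exists_block b (bst b k).1 (bst b k).2).choose_spec.2.2

lemma bst_succ_fst (k : ℕ) : (bst b (k + 1)).1 = (blk b k).sup id + 1 := rfl

lemma bst_succ_snd (k : ℕ) : (bst b (k + 1)).2 = (bst b k).2 + ∑ i ∈ blk b k, b.get i := rfl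

lemma blk_lt (k : ℕ) : ∀ i ∈ blk b k, i < (bst b (k + 1)).1 := by
  intro i hi
  rw [bst_succ_fst]
  have : i ≤ (blk b k).sup id := Finset.le_sup (f := id) hi
  omega

lemma bst_fst_mono : Monotone (fun k => (bst b k).1) := by
  apply monotone_nat_of_le_succ
  intro k
  obtain ⟨i, hi⟩ := blk_nonempty b k
  have h1 := blk_ge b k i hi
  have h2 := blk_lt b k i hi
  omega

lemma bst_snd_mono : Monotone (fun k => (bst b k).2) := by
  apply monotone_nat_of_le_succ
  intro k
  rw [bst_succ_snd]
  omega

lemma blk_sep {k l : ℕ} (h : k < l) : ∀ i ∈ blk b k, ∀ j ∈ blk b l, i < j := by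
  intro i hi j hj
  have h1 := blk_lt b k i hi
  have h2 := blk_ge b l j hj
  have h3 := bst_fst_mono b (show k + 1 ≤ l from h)
  simp only at h3
  omega

lemma nbits_blk_subset (k : ℕ) :
    nbits (∑ i ∈ blk b k, b.get i) ⊆ Finset.Ico (bst b k).2 (bst b (k + 1)).2 := by
  intro i hi
  rw [Finset.mem_Ico]
  constructor
  · exact le_of_mem_nbits_of_dvd (blk_dvd b k) hi
  · have := lt_of_mem_nbits hi
    rw [bst_succ_snd]
    omega

lemma nbits_blk_disjoint {k l : ℕ} (h : k < l) :
    Disjoint (nbits (∑ i ∈ blk b k, b.get i)) (nbits (∑ i ∈ blk b l, b.get i)) := by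
  apply Finset.disjoint_left.mpr
  intro i hik hil
  have h1 := Finset.mem_Ico.mp (nbits_blk_subset b k hik)
  have h2 := Finset.mem_Ico.mp (nbits_blk_subset b l hil)
  have h3 := bst_snd_mono b (show k + 1 ≤ l from h)
  simp only at h3
  omega

lemma blk_disjoint {k l : ℕ} (h : k ≠ l) : Disjoint (blk b k) (blk b l) := by
  rcases Nat.lt_or_ge k l with hlt | hge
  · exact Finset.disjoint_left.mpr fun i hik hil =>
      lt_irrefl i (blk_sep b hlt i hik i hil)
  · have hlt : l < k := by omega
    exact Finset.disjoint_left.mpr fun i hik hil =>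
      lt_irrefl i (blk_sep b hlt i hil i hik)

lemma nbits_blk_disjoint' {k l : ℕ} (h : k ≠ l) :
    Disjoint (nbits (∑ i ∈ blk b k, b.get i)) (nbits (∑ i ∈ blk b l, b.get i)) := by
  rcases Nat.lt_or_ge k l with hlt | hge
  · exact nbits_blk_disjoint b hlt
  · exact (nbits_blk_disjoint b (show l < k by omega)).symm

end Blocks

/-! ### Positivity of finite sums -/

lemma FS_pos : ∀ (a : Stream' ℕ) (m : ℕ), m ∈ Hindman.FS a → (∀ i, 1 ≤ a.get i) → 1 ≤ m := by
  intro a m h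
  induction h with
  | head' a => intro ha; exact ha 0
  | tail' a m h ih => intro ha; exact ih fun i => ha (i + 1)
  | cons' a m h ih => intro ha; have := ha 0; change 1 ≤ a.get 0 + m; omega

/-! ### Restriction of witnesses -/

lemma witness_restrict {s : ℕ → Finset ℕ} {A : Set (Finset ℕ)} {m n : ℕ} (h : m ≤ n)
    (t : Fin n → Finset ℕ) (h1 : ∀ i, (t i).Nonempty)
    (h2 : Pairwise (Function.onFun Disjoint t))
    (h3 : FUfin t ⊆ FU s ∩ A) (h4 : CompleteMesh s t) :
    ∃ t' : Fin m → Finset ℕ, (∀ i, (t' i).Nonempty) ∧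
      Pairwise (Function.onFun Disjoint t') ∧ FUfin t' ⊆ FU s ∩ A ∧ CompleteMesh s t' := by
  refine ⟨t ∘ Fin.castLE h, fun i => h1 _, ?_, ?_, ?_⟩
  · intro i j hij
    exact h2 (fun he => hij (Fin.castLE_injective h he))
  · rintro x ⟨v, hv, rfl⟩
    refine h3 ⟨v.image (Fin.castLE h), hv.image _, ?_⟩
    ext y
    simp only [Finset.mem_biUnion, Finset.mem_image, Function.comp_apply]
    constructor
    · rintro ⟨i, hi, hy⟩; exact ⟨Fin.castLE h i, ⟨i, hi, rfl⟩, hy⟩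
    · rintro ⟨j, ⟨i, hi, rfl⟩, hy⟩; exact ⟨i, hi, hy⟩
  · intro i j hij
    exact h4 _ _ (fun he => hij (Fin.castLE_injective h he))

/-! ### The main theorem -/

/-- Being `s`-meshed is partition regular. -/
theorem sMeshed_partition_regular (s : ℕ → Finset ℕ) (hs : IsDisjointSeq s)
    (A A₀ A₁ : Set (Finset ℕ)) (hA : SMeshed s A) (hsplit : A = A₀ ∪ A₁) :
    SMeshed s A₀ ∨ SMeshed s A₁ := by
  classical
  by_contra hcon
  push_neg at hcon
  obtain ⟨h0, h1⟩ := hcon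
  simp only [SMeshed, not_forall] at h0 h1
  obtain ⟨n₀, hn₀⟩ := h0
  obtain ⟨n₁, hn₁⟩ := h1
  set n := max n₀ n₁ with hn
  choose t ht1 ht2 ht3 ht4 using hA
  set U : Ultrafilter ℕ := Ultrafilter.of Filter.atTop with hU
  have hatTop : ∀ k : ℕ, {N : ℕ | k < N} ∈ U := by
    intro k
    apply Ultrafilter.of_le Filter.atTop
    exact Filter.mem_atTop_sets.mpr ⟨k + 1, fun N hN => by simpa using by omega⟩
  set T : ℕ → ℕ → Finset ℕ := fun N i => if h : i < N then t N ⟨i, h⟩ else ∅ with hT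
  set g : ℕ → Finset ℕ → Finset ℕ := fun N v => v.biUnion (T N) with hg
  have hTeq : ∀ (N i : ℕ) (h : i < N), T N i = t N ⟨i, h⟩ := fun N i h => dif_pos h
  -- claim A : unions of columns of the N-th witness are in FU s ∩ A
  have claimA : ∀ v : Finset ℕ, v.Nonempty → ∀ N : ℕ, (∀ i ∈ v, i < N) →
      g N v ∈ FU s ∩ A := by
    intro v hv N hvN
    have hmem : g N v ∈ FUfin (t N) := by
      refine ⟨v.attachFin hvN, ?_, ?_⟩
      · obtain ⟨i, hi⟩ := hv
        exact ⟨⟨i, hvN i hi⟩, (Finset.mem_attachFin hvN).mpr hi⟩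
      · ext y
        simp only [hg, Finset.mem_biUnion]
        constructor
        · rintro ⟨i, hi, hy⟩
          refine ⟨⟨i, hvN i hi⟩, (Finset.mem_attachFin hvN).mpr hi, ?_⟩
          have : y ∈ T N i := hy
          rwa [hTeq N i (hvN i hi)] at this
        · rintro ⟨⟨i, hiN⟩, hi, hy⟩
          rw [Finset.mem_attachFin] at hi
          refine ⟨i, hi, ?_⟩
          show y ∈ T N i
          rwa [hTeq N i hiN]
    exact ht3 N hmem
  -- the coloring
  set χ : Finset ℕ → Bool := fun v => decide ({N : ℕ | g N v ∈ A₀} ∈ U) with hχ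
  have claimB : ∀ v : Finset ℕ, v.Nonempty →
      {N : ℕ | g N v ∈ (bif χ v then A₀ else A₁)} ∈ U := by
    intro v hv
    by_cases hA0 : {N : ℕ | g N v ∈ A₀} ∈ U
    · have : χ v = true := by simp [hχ, hA0]
      rw [this]; exact hA0
    · have hχv : χ v = false := by simp [hχ, hA0]
      rw [hχv]
      have hc : {N : ℕ | g N v ∈ A₀}ᶜ ∈ U := Ultrafilter.compl_mem_iff_notMem.mpr hA0
      have hbig : {N : ℕ | v.sup id < N} ∈ U := hatTop (v.sup id)
      have hsub : {N : ℕ | g N v ∈ A₀}ᶜ ∩ {N : ℕ | v.sup id < N} ⊆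
          {N : ℕ | g N v ∈ (bif false then A₀ else A₁)} := by
        rintro N ⟨hN1, hN2⟩
        have hlt : ∀ i ∈ v, i < N := fun i hi =>
          lt_of_le_of_lt (Finset.le_sup (f := id) hi) hN2
        have := (claimA v hv N hlt).2
        rw [hsplit] at this
        rcases this with h' | h'
        · exact absurd h' hN1
        · exact h'
      exact Filter.mem_of_superset (Filter.inter_mem hc hbig) hsub
  -- Hindman's theorem
  set a : Stream' ℕ := fun i => 2 ^ i with ha
  have hcov : Hindman.FS a ⊆
      ⋃₀ {{m : ℕ | χ (nbits m) = true ∧ m ∈ Hindman.FS a},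
          {m : ℕ | χ (nbits m) = false ∧ m ∈ Hindman.FS a}} := by
    intro m hm
    rcases Bool.eq_false_or_eq_true (χ (nbits m)) with hb | hb
    · exact ⟨_, Set.mem_insert _ _, hb, hm⟩
    · exact ⟨_, Set.mem_insert_of_mem _ rfl, hb, hm⟩
    
  obtain ⟨c, hc, b, hFSb⟩ := Hindman.FS_partition_regular a
    {{m : ℕ | χ (nbits m) = true ∧ m ∈ Hindman.FS a},
     {m : ℕ | χ (nbits m) = false ∧ m ∈ Hindman.FS a}}
    ((Set.finite_singleton _).insert _) hcov
  have hcolor : ∃ color : Bool,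
      Hindman.FS b ⊆ {m : ℕ | χ (nbits m) = color ∧ m ∈ Hindman.FS a} := by
    rcases hc with hc | hc
    · exact ⟨true, hc ▸ hFSb⟩
    · exact ⟨false, (Set.mem_singleton_iff.mp hc) ▸ hFSb⟩
  obtain ⟨color, hcolor⟩ := hcolor
  have hb : ∀ i, 1 ≤ b.get i := by
    intro i
    have := (hcolor (Hindman.FS.singleton b i)).2
    exact FS_pos a _ this (fun i => Nat.two_pow_pos i)
  -- blocks and their bit supports
  set σ : ℕ → ℕ := fun k => ∑ i ∈ blk b k, b.get i with hσ
  set S : Fin n → Finset ℕ := fun k => nbits (σ k.1) with hS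
  have hσpos : ∀ k : ℕ, 1 ≤ σ k := by
    intro k
    obtain ⟨i, hi⟩ := blk_nonempty b k
    calc 1 ≤ b.get i := hb i
      _ ≤ σ k := Finset.single_le_sum (fun _ _ => Nat.zero_le _) hi
  have hSne : ∀ k : Fin n, (S k).Nonempty := fun k => nbits_nonempty (hσpos k.1)
  have hSdisj : ∀ k l : Fin n, k ≠ l → Disjoint (S k) (S l) := by
    intro k l hkl
    exact nbits_blk_disjoint' b (fun he => hkl (Fin.val_injective he))
  -- the union of bit supports over w has color `color`
  have hkey : ∀ w : Finset (Fin n), w.Nonempty → χ (w.biUnion S) = color := by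
    intro w hw
    have hsum : nbits (∑ k ∈ w, σ k.1) = w.biUnion S := by
      rw [nbits_finsetSum]
      intro x hx y hy hxy
      exact nbits_blk_disjoint' b (fun he => hxy (Fin.val_injective he))
    have hmem : (∑ k ∈ w, σ k.1) ∈ Hindman.FS b := by
      have hdisj : (↑w : Set (Fin n)).PairwiseDisjoint (fun k : Fin n => blk b k.1) := by
        intro x _ y _ hxy
        exact blk_disjoint b (fun he => hxy (Fin.val_injective he))
      have : ∑ k ∈ w, σ k.1 = ∑ i ∈ w.biUnion (fun k : Fin n => blk b k.1), b.get i :=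
        (Finset.sum_biUnion hdisj).symm
      rw [this]
      apply Hindman.FS.finset_sum
      obtain ⟨k, hk⟩ := hw
      obtain ⟨i, hi⟩ := blk_nonempty b k.1
      exact ⟨i, Finset.mem_biUnion.mpr ⟨k, hk, hi⟩⟩
    have := (hcolor hmem).1
    rwa [hsum] at this
  -- choose a good N
  set Wall : Finset ℕ := (Finset.univ : Finset (Fin n)).biUnion S with hWall
  set E : Finset (Fin n) → Set ℕ := fun w =>
    {N : ℕ | w.Nonempty → g N (w.biUnion S) ∈ (bif χ (w.biUnion S) then A₀ else A₁)} with hE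
  have hEmem : ∀ w : Finset (Fin n), E w ∈ U := by
    intro w
    by_cases hw : w.Nonempty
    · have hne : (w.biUnion S).Nonempty := by
        obtain ⟨k, hk⟩ := hw
        obtain ⟨i, hi⟩ := hSne k
        exact ⟨i, Finset.mem_biUnion.mpr ⟨k, hk, hi⟩⟩
      exact Filter.mem_of_superset (claimB _ hne) (fun N hN _ => hN)
    · exact Filter.univ_mem' (fun N => by simp [hE]; intro h; exact absurd h hw)
  have hinter : (⋂ w : Finset (Fin n), E w) ∩ {N : ℕ | Wall.sup id < N} ∈ U := by
    apply Filter.inter_mem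
    · exact Filter.iInter_mem.mpr hEmem
    · exact hatTop _
  obtain ⟨N, hN1, hN2⟩ := Ultrafilter.nonempty_of_mem hinter
  have hNall : ∀ w : Finset (Fin n), w ∈ Finset.univ.powerset → N ∈ E w := by
    intro w _
    exact Set.mem_iInter.mp hN1 w
  have hWlt : ∀ i ∈ Wall, i < N := fun i hi =>
    lt_of_le_of_lt (Finset.le_sup (f := id) hi) hN2
  have hSlt : ∀ k : Fin n, ∀ i ∈ S k, i < N := by
    intro k i hi
    exact hWlt i (Finset.mem_biUnion.mpr ⟨k, Finset.mem_univ k, hi⟩)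
  -- the witness
  set u : Fin n → Finset ℕ := fun k => (S k).biUnion (T N) with hu
  have hu1 : ∀ k, (u k).Nonempty := by
    intro k
    obtain ⟨i, hi⟩ := hSne k
    have hiN := hSlt k i hi
    obtain ⟨x, hx⟩ := ht1 N ⟨i, hiN⟩
    refine ⟨x, Finset.mem_biUnion.mpr ⟨i, hi, ?_⟩⟩
    show x ∈ T N i
    rwa [hTeq N i hiN]
  have hTdisj : ∀ i j : ℕ, i ≠ j → Disjoint (T N i) (T N j) := by
    intro i j hij
    by_cases hiN : i < N
    · by_cases hjN : j < N
      · have : (⟨i, hiN⟩ : Fin N) ≠ ⟨j, hjN⟩ := fun he => hij (congrArg Fin.val he)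
        have h' := ht2 N this
        rw [hTeq N i hiN, hTeq N j hjN]
        exact h'
      · rw [show T N j = ∅ from dif_neg hjN]
        exact Finset.disjoint_empty_right _
    · rw [show T N i = ∅ from dif_neg hiN]
      exact Finset.disjoint_empty_left _
  have hu2 : Pairwise (Function.onFun Disjoint u) := by
    intro k l hkl
    rw [Function.onFun, hu]
    rw [Finset.disjoint_biUnion_left]
    intro i hi
    rw [Finset.disjoint_biUnion_right]
    intro j hj
    apply hTdisj
    exact fun he => Finset.disjoint_left.mp (hSdisj k l hkl) hi (he ▸ hj)
  have hu3 : FUfin u ⊆ FU s ∩ (bif color then A₀ else A₁) := by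
    rintro x ⟨w, hw, rfl⟩
    have hx : w.biUnion u = g N (w.biUnion S) := by
      show w.biUnion (fun k => (S k).biUnion (T N)) = (w.biUnion S).biUnion (T N)
      exact (Finset.biUnion_biUnion w S (T N)).symm
    constructor
    · rw [hx]
      refine (claimA (w.biUnion S) ?_ N ?_).1
      · obtain ⟨k, hk⟩ := hw
        obtain ⟨i, hi⟩ := hSne k
        exact ⟨i, Finset.mem_biUnion.mpr ⟨k, hk, hi⟩⟩
      · intro i hi
        obtain ⟨k, _, hik⟩ := Finset.mem_biUnion.mp hi
        exact hSlt k i hik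
    · rw [hx]
      have := hNall w (Finset.mem_powerset.mpr (Finset.subset_univ w)) hw
      rwa [hkey w hw] at this
  have hu4 : CompleteMesh s u := by
    intro k l hkl
    obtain ⟨i, hi⟩ := hSne k
    obtain ⟨j, hj⟩ := hSne l
    have hij : i ≠ j := fun he => Finset.disjoint_left.mp (hSdisj k l hkl) hi (he ▸ hj)
    have hiN := hSlt k i hi
    have hjN := hSlt l j hj
    obtain ⟨m, k', hm, hk', hmesh⟩ := ht4 N ⟨i, hiN⟩ ⟨j, hjN⟩
      (fun he => hij (congrArg Fin.val he))
    refine ⟨m, k', ?_, ?_, hmesh⟩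
    · refine subset_trans ?_ (Finset.subset_biUnion_of_mem (T N) hi)
      rw [hTeq N i hiN]; exact hm
    · refine subset_trans ?_ (Finset.subset_biUnion_of_mem (T N) hj)
      rw [hTeq N j hjN]; exact hk'
  -- contradiction
  rcases Bool.eq_false_or_eq_true color with hcol | hcol
  · rw [hcol] at hu3
    have hu3' : FUfin u ⊆ FU s ∩ A₀ := hu3
    obtain ⟨t', p1, p2, p3, p4⟩ :=
      witness_restrict (le_max_left n₀ n₁) u hu1 hu2 hu3' hu4
    exact hn₀ ⟨t', p1, p2, p3, p4⟩
  · rw [hcol] at hu3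
    have hu3' : FUfin u ⊆ FU s ∩ A₁ := hu3
    obtain ⟨t', p1, p2, p3, p4⟩ :=
      witness_restrict (le_max_right n₀ n₁) u hu1 hu2 hu3' hu4
    exact hn₁ ⟨t', p1, p2, p3, p4⟩
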